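/- (Linear contraction under strong convexity) Let f be convex, differentiable, L-smooth and m-strongly convex with m > 0, g convex, F = f + g with minimizer x*. Let U = diag(u) with uᵢ > 0 and U ⪰ L·I, and x⁺ = prox_{g,U}(x − U⁻¹∇f(x)). Then ‖x⁺ − x*‖²_U ≤ (1 − m/u_max)·‖x − x*‖²_U, where u_max = maxᵢ uᵢ. -/

import Mathlib

noncomputable section

/-- Euclidean dot product on `Fin n → ℝ`. -/
def dot {n : ℕ} (a b : Fin n → ℝ) : ℝ := ∑ i, a i * b i

/-- Squared Euclidean norm. -/
def sqnorm {n : ℕ} (a : Fin n → ℝ) : ℝ := dot a a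

namespace ProofAux

variable {n : ℕ}

lemma sqnorm_nonneg (a : Fin n → ℝ) : 0 ≤ sqnorm a := by
  unfold sqnorm dot
  exact Finset.sum_nonneg fun i _ => mul_self_nonneg (a i)

lemma dot_sub_left (a b c : Fin n → ℝ) : dot (a - b) c = dot a c - dot b c := by
  simp [dot, sub_mul, Finset.sum_sub_distrib]

lemma dot_sub_right (a b c : Fin n → ℝ) : dot a (b - c) = dot a b - dot a c := by
  simp [dot, mul_sub, Finset.sum_sub_distrib]

lemma sqnorm_smul (t : ℝ) (d : Fin n → ℝ) : sqnorm (t • d) = t^2 * sqnorm d := by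
  simp only [sqnorm, dot, Pi.smul_apply, smul_eq_mul, Finset.mul_sum]
  exact Finset.sum_congr rfl fun i _ => by ring

lemma sqrt_sqnorm_smul (t : ℝ) (d : Fin n → ℝ) :
    Real.sqrt (sqnorm (t • d)) = |t| * Real.sqrt (sqnorm d) := by
  rw [sqnorm_smul, Real.sqrt_mul (sq_nonneg t), Real.sqrt_sq_eq_abs]

lemma abs_dot_le (a b : Fin n → ℝ) :
    |dot a b| ≤ Real.sqrt (sqnorm a) * Real.sqrt (sqnorm b) := by
  have h := Finset.sum_mul_sq_le_sq_mul_sq Finset.univ a b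
  have h2 : (dot a b)^2 ≤ sqnorm a * sqnorm b := by
    simpa [dot, sqnorm, sq] using h
  calc |dot a b| = Real.sqrt ((dot a b)^2) := (Real.sqrt_sq_eq_abs _).symm
    _ ≤ Real.sqrt (sqnorm a * sqnorm b) := Real.sqrt_le_sqrt h2
    _ = Real.sqrt (sqnorm a) * Real.sqrt (sqnorm b) :=
        Real.sqrt_mul (sqnorm_nonneg a) _

lemma dot_le (a b : Fin n → ℝ) :
    dot a b ≤ Real.sqrt (sqnorm a) * Real.sqrt (sqnorm b) :=
  le_trans (le_abs_self _) (abs_dot_le a b)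

lemma taylor_bounds (f : (Fin n → ℝ) → ℝ) (f' : (Fin n → ℝ) → (Fin n → ℝ)) (L m : ℝ)
    (hL : 0 ≤ L)
    (hdiff : ∀ x v, HasDerivAt (fun t : ℝ => f (x + t • v)) (dot (f' x) v) 0)
    (hsmooth : ∀ x y, Real.sqrt (sqnorm (f' x - f' y)) ≤ L * Real.sqrt (sqnorm (x - y)))
    (hstrong : ∀ x y, m * sqnorm (x - y) ≤ dot (f' x - f' y) (x - y))
    (a d : Fin n → ℝ) :
    dot (f' a) d + m/2 * sqnorm d ≤ f (a + d) - f a ∧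
      f (a + d) - f a ≤ dot (f' a) d + L/2 * sqnorm d := by
  set φ' : ℝ → ℝ := fun t => dot (f' (a + t • d)) d with hφ'
  have hderiv : ∀ t : ℝ, HasDerivAt (fun s : ℝ => f (a + s • d)) (φ' t) t := by
    intro t
    have h := hdiff (a + t • d) d
    have key : (fun s : ℝ => f (a + s • d)) =
        (fun s : ℝ => f (a + t • d + s • d)) ∘ (fun s : ℝ => s - t) := by
      funext s
      show f (a + s • d) = f (a + t • d + (s - t) • d)
      congr 1
      rw [sub_smul]
      abel
    rw [key]
    have hid : HasDerivAt (fun s : ℝ => s - t) 1 t := (hasDerivAt_id t).sub_const t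
    have : ((t : ℝ) - t) = 0 := sub_self t
    have hcomp := HasDerivAt.comp t (by rw [this] at *; simpa [sub_self] using h) hid
    simpa using hcomp
  have hzero : φ' 0 = dot (f' a) d := by simp [hφ']
  have hlip : ∀ s t : ℝ, |φ' s - φ' t| ≤ (L * sqnorm d) * |s - t| := by
    intro s t
    have h1 : φ' s - φ' t = dot (f' (a + s • d) - f' (a + t • d)) d := (dot_sub_left _ _ _).symm
    rw [h1]
    have h2 := abs_dot_le (f' (a + s • d) - f' (a + t • d)) d
    have h3 := hsmooth (a + s • d) (a + t • d)
    have h4 : a + s • d - (a + t • d) = (s - t) • d := by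
      rw [sub_smul]; abel
    rw [h4, sqrt_sqnorm_smul] at h3
    have hsq : Real.sqrt (sqnorm d) * Real.sqrt (sqnorm d) = sqnorm d :=
      Real.mul_self_sqrt (sqnorm_nonneg d)
    have h5 : Real.sqrt (sqnorm (f' (a + s • d) - f' (a + t • d))) * Real.sqrt (sqnorm d)
        ≤ (L * (|s - t| * Real.sqrt (sqnorm d))) * Real.sqrt (sqnorm d) :=
      mul_le_mul_of_nonneg_right h3 (Real.sqrt_nonneg _)
    calc |dot (f' (a + s • d) - f' (a + t • d)) d|
        ≤ Real.sqrt (sqnorm (f' (a + s • d) - f' (a + t • d))) * Real.sqrt (sqnorm d) := h2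
      _ ≤ (L * (|s - t| * Real.sqrt (sqnorm d))) * Real.sqrt (sqnorm d) := h5
      _ = L * (Real.sqrt (sqnorm d) * Real.sqrt (sqnorm d)) * |s - t| := by ring
      _ = (L * sqnorm d) * |s - t| := by rw [hsq]
  have hcont : Continuous φ' := by
    have hK : (0:ℝ) ≤ L * sqnorm d := mul_nonneg hL (sqnorm_nonneg d)
    have : LipschitzWith (Real.toNNReal (L * sqnorm d)) φ' := by
      apply LipschitzWith.of_dist_le_mul
      intro s t
      rw [Real.dist_eq, Real.dist_eq, Real.coe_toNNReal _ hK]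
      exact hlip s t
    exact this.continuous
  have hint : IntervalIntegrable φ' MeasureTheory.volume 0 1 := hcont.intervalIntegrable 0 1
  have hftc : ∫ t in (0:ℝ)..1, φ' t = f (a + d) - f a := by
    have := intervalIntegral.integral_eq_sub_of_hasDerivAt
      (f := fun s : ℝ => f (a + s • d)) (f' := φ') (a := 0) (b := 1)
      (fun t _ => hderiv t) hint
    simpa using this
  constructor
  · have hlow : ∀ t ∈ Set.Icc (0:ℝ) 1, dot (f' a) d + m * t * sqnorm d ≤ φ' t := by
      intro t ht
      rcases eq_or_lt_of_le ht.1 with h0 | h0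
      · rw [← h0]; simp [hφ']
      · have hs := hstrong (a + t • d) a
        have he : a + t • d - a = t • d := by abel
        rw [he] at hs
        have hdot : dot (f' (a + t • d) - f' a) (t • d) = t * (φ' t - dot (f' a) d) := by
          rw [dot_sub_left]
          simp only [hφ', dot, Pi.smul_apply, smul_eq_mul, Finset.mul_sum,
            Finset.sum_sub_distrib, mul_sub]
          congr 1 <;> exact Finset.sum_congr rfl fun i _ => by ring
        rw [hdot, sqnorm_smul] at hs
        nlinarith [hs, h0]
    have hlowint : Continuous (fun t : ℝ => dot (f' a) d + m * t * sqnorm d) := by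
      fun_prop
    have hmono := intervalIntegral.integral_mono_on zero_le_one
      (hlowint.intervalIntegrable 0 1) hint hlow
    have hval : ∫ t in (0:ℝ)..1, (dot (f' a) d + m * t * sqnorm d) =
        dot (f' a) d + m/2 * sqnorm d := by
      have hI2 : IntervalIntegrable (fun t : ℝ => m * t * sqnorm d)
          MeasureTheory.volume 0 1 := by
        apply Continuous.intervalIntegrable; fun_prop
      rw [intervalIntegral.integral_add (intervalIntegrable_const) hI2]
      have : (fun t : ℝ => m * t * sqnorm d) = fun t : ℝ => (m * sqnorm d) * t := by
        funext t; ring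
      rw [this, intervalIntegral.integral_const_mul, integral_id, intervalIntegral.integral_const]
      simp; ring
    rw [hval] at hmono
    linarith [hftc ▸ hmono]
  · have hup : ∀ t ∈ Set.Icc (0:ℝ) 1, φ' t ≤ dot (f' a) d + L * t * sqnorm d := by
      intro t ht
      have h2 : φ' t - dot (f' a) d = dot (f' (a + t • d) - f' a) d := by
        rw [dot_sub_left]
      have h3 := dot_le (f' (a + t • d) - f' a) d
      have h4 := hsmooth (a + t • d) a
      have he : a + t • d - a = t • d := by abel
      rw [he, sqrt_sqnorm_smul, abs_of_nonneg ht.1] at h4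
      have hsq : Real.sqrt (sqnorm d) * Real.sqrt (sqnorm d) = sqnorm d :=
        Real.mul_self_sqrt (sqnorm_nonneg d)
      have h5 : dot (f' (a + t • d) - f' a) d ≤ L * t * sqnorm d := by
        calc dot (f' (a + t • d) - f' a) d
            ≤ Real.sqrt (sqnorm (f' (a + t • d) - f' a)) * Real.sqrt (sqnorm d) := h3
          _ ≤ (L * (t * Real.sqrt (sqnorm d))) * Real.sqrt (sqnorm d) :=
              mul_le_mul_of_nonneg_right h4 (Real.sqrt_nonneg _)
          _ = L * t * (Real.sqrt (sqnorm d) * Real.sqrt (sqnorm d)) := by ring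
          _ = L * t * sqnorm d := by rw [hsq]
      linarith [h2 ▸ h5]
    have hupint : Continuous (fun t : ℝ => dot (f' a) d + L * t * sqnorm d) := by
      fun_prop
    have hmono := intervalIntegral.integral_mono_on zero_le_one
      hint (hupint.intervalIntegrable 0 1) hup
    have hval : ∫ t in (0:ℝ)..1, (dot (f' a) d + L * t * sqnorm d) =
        dot (f' a) d + L/2 * sqnorm d := by
      have hI2 : IntervalIntegrable (fun t : ℝ => L * t * sqnorm d)
          MeasureTheory.volume 0 1 := by
        apply Continuous.intervalIntegrable; fun_prop
      rw [intervalIntegral.integral_add (intervalIntegrable_const) hI2]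
      have : (fun t : ℝ => L * t * sqnorm d) = fun t : ℝ => (L * sqnorm d) * t := by
        funext t; ring
      rw [this, intervalIntegral.integral_const_mul, integral_id, intervalIntegral.integral_const]
      simp; ring
    rw [hval] at hmono
    linarith [hftc ▸ hmono]

lemma nonneg_of_small_t (c b : ℝ) (hb : 0 ≤ b)
    (h : ∀ t : ℝ, 0 < t → t ≤ 1 → 0 ≤ c + t * b) : 0 ≤ c := by
  rcases eq_or_lt_of_le hb with h0 | h0
  · simpa [← h0] using h 1 one_pos le_rfl
  · by_contra hc
    push_neg at hc
    have ht : 0 < min 1 (-c / (2 * b)) := lt_min one_pos (div_pos (by linarith) (by linarith))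
    have h1 := h _ ht (min_le_left _ _)
    have h2 : min 1 (-c / (2 * b)) * b ≤ (-c / (2 * b)) * b :=
      mul_le_mul_of_nonneg_right (min_le_right _ _) h0.le
    have h3 : (-c / (2 * b)) * b = -c / 2 := by field_simp
    linarith

end ProofAux

open ProofAux

theorem linear_contraction_strongly_convex {n : ℕ} (f g : (Fin n → ℝ) → ℝ)
    (f' : (Fin n → ℝ) → (Fin n → ℝ)) (L m : ℝ) (hL : 0 < L) (hm : 0 < m)
    (hfconv : ConvexOn ℝ Set.univ f) (hgconv : ConvexOn ℝ Set.univ g)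
    (hdiff : ∀ x v, HasDerivAt (fun t : ℝ => f (x + t • v)) (dot (f' x) v) 0)
    (hsmooth : ∀ x y, Real.sqrt (sqnorm (f' x - f' y)) ≤ L * Real.sqrt (sqnorm (x - y)))
    (hstrong : ∀ x y, m * sqnorm (x - y) ≤ dot (f' x - f' y) (x - y))
    (u : Fin n → ℝ) (hu : ∀ i, 0 < u i)
    (hUL : ((Matrix.diagonal u) - L • (1 : Matrix (Fin n) (Fin n) ℝ)).PosSemidef)
    (umax : ℝ) (humax : IsGreatest (Set.range u) umax)
    (xstar : Fin n → ℝ) (hxstar : IsMinOn (fun z => f z + g z) Set.univ xstar)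
    (x xplus : Fin n → ℝ)
    (hxplus : IsMinOn (fun v => g v + (1 / 2) *
        dot ((x - (Matrix.diagonal u)⁻¹.mulVec (f' x)) - v)
            ((Matrix.diagonal u).mulVec ((x - (Matrix.diagonal u)⁻¹.mulVec (f' x)) - v)))
      Set.univ xplus) :
    dot (xplus - xstar) ((Matrix.diagonal u).mulVec (xplus - xstar)) ≤
      (1 - m / umax) * dot (x - xstar) ((Matrix.diagonal u).mulVec (x - xstar)) := by
  classical
  obtain ⟨i₀, hi₀⟩ := humax.1
  have humax_pos : 0 < umax := hi₀ ▸ hu i₀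
  -- inverse of the diagonal matrix
  have hUinv : (Matrix.diagonal u)⁻¹ = Matrix.diagonal (fun i => (u i)⁻¹) := by
    apply Matrix.inv_eq_right_inv
    rw [Matrix.diagonal_mul_diagonal]
    have : (fun i => u i * (u i)⁻¹) = fun _ : Fin n => (1:ℝ) :=
      funext fun i => mul_inv_cancel₀ (hu i).ne'
    rw [this]
    exact Matrix.diagonal_one
  set w : Fin n → ℝ := x - (Matrix.diagonal u)⁻¹.mulVec (f' x) with hw
  have hwi : ∀ i, w i = x i - (u i)⁻¹ * f' x i := by
    intro i
    rw [hw]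
    simp [hUinv, Matrix.mulVec_diagonal]
  -- quadratic form as a sum
  have hQ : ∀ y : Fin n → ℝ,
      dot (w - y) ((Matrix.diagonal u).mulVec (w - y)) = ∑ i, u i * (w i - y i)^2 := by
    intro y
    simp only [dot]
    refine Finset.sum_congr rfl fun i _ => ?_
    rw [Matrix.mulVec_diagonal]
    simp only [Pi.sub_apply]
    ring
  -- prox inequality
  have hprox : ∀ z : Fin n → ℝ,
      g xplus + ∑ i, u i * (w i - xplus i) * (z i - xplus i) ≤ g z := by
    intro z
    set e : Fin n → ℝ := z - xplus with he
    have hei : ∀ i, e i = z i - xplus i := fun i => rfl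
    set A : ℝ := ∑ i, u i * (w i - xplus i) * (e i) with hA
    set B : ℝ := ∑ i, u i * (e i)^2 with hB
    have hBnn : 0 ≤ B :=
      Finset.sum_nonneg fun i _ => mul_nonneg (hu i).le (sq_nonneg _)
    have key : 0 ≤ (g z - g xplus - A) := by
      apply nonneg_of_small_t _ (B/2) (by linarith)
      intro t ht0 ht1
      set v : Fin n → ℝ := xplus + t • e with hv
      have hmin := (isMinOn_iff.mp hxplus) v (Set.mem_univ v)
      have hgc := hgconv.2 (Set.mem_univ xplus) (Set.mem_univ z)
        (by linarith : (0:ℝ) ≤ 1 - t) ht0.le (by ring)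
      have hvz : (1-t:ℝ) • xplus + t • z = v := by
        funext i
        simp only [hv, Pi.add_apply, Pi.smul_apply, smul_eq_mul, hei]
        ring
      rw [hvz] at hgc
      simp only [smul_eq_mul] at hgc
      have hqv : ∑ i, u i * (w i - v i)^2 =
          ∑ i, u i * (w i - xplus i)^2 - (2*t) * A + t^2 * B := by
        have h1 : ∀ i ∈ Finset.univ, u i * (w i - v i)^2 =
            u i * (w i - xplus i)^2 - (2*t) * (u i * (w i - xplus i) * e i)
              + t^2 * (u i * e i^2) := by
          intro i _
          have hvi : v i = xplus i + t * e i := by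
            simp [hv]
          rw [hvi]; ring
        rw [Finset.sum_congr rfl h1, Finset.sum_add_distrib, Finset.sum_sub_distrib,
          ← Finset.mul_sum, ← Finset.mul_sum, hA, hB]
      rw [hQ, hQ, hqv] at hmin
      have hX : 0 ≤ t * ((g z - g xplus - A) + t * (B / 2)) := by nlinarith [hmin, hgc]
      have := le_of_mul_le_mul_left (by linarith [hX] : t * 0 ≤
        t * ((g z - g xplus - A) + t * (B / 2))) ht0
      linarith
    have hAe : A = ∑ i, u i * (w i - xplus i) * (z i - xplus i) :=
      Finset.sum_congr rfl fun i _ => rfl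
    linarith [hAe ▸ key]
  -- Taylor bounds
  have htay := taylor_bounds f f' L m hL.le hdiff hsmooth hstrong
  have hup := (htay x (xplus - x)).2
  have hxx : x + (xplus - x) = xplus := by abel
  rw [hxx] at hup
  have hlo := (htay x (xstar - x)).1
  have hxx2 : x + (xstar - x) = xstar := by abel
  rw [hxx2] at hlo
  -- PSD bound
  have hpsd : L * sqnorm (xplus - x) ≤ ∑ i, u i * (xplus i - x i)^2 := by
    have h0 := hUL.dotProduct_mulVec_nonneg (xplus - x)
    have e1 : dotProduct (xplus - x) ((Matrix.diagonal u).mulVec (xplus - x)) =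
        ∑ i, u i * (xplus i - x i)^2 := by
      simp only [dotProduct, Matrix.mulVec_diagonal, Pi.sub_apply]
      exact Finset.sum_congr rfl fun i _ => by ring
    have e2 : dotProduct (xplus - x)
        ((L • (1 : Matrix (Fin n) (Fin n) ℝ)).mulVec (xplus - x)) =
        L * sqnorm (xplus - x) := by
      rw [Matrix.smul_mulVec, Matrix.one_mulVec]
      simp only [dotProduct, Pi.smul_apply, smul_eq_mul, sqnorm, dot,
        Finset.mul_sum, Pi.sub_apply]
      exact Finset.sum_congr rfl fun i _ => by ring
    rw [show star (xplus - x) = xplus - x from star_trivial _, Matrix.sub_mulVec,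
      dotProduct_sub, e1, e2] at h0
    linarith [h0]
  -- prox at xstar, rewritten
  have hproxs := hprox xstar
  set C : ℝ := ∑ i, u i * (x i - xplus i) * (xstar i - xplus i) with hCdef
  have hsum : ∑ i, u i * (w i - xplus i) * (xstar i - xplus i) =
      C - dot (f' x) (xstar - xplus) := by
    have h1 : ∀ i ∈ Finset.univ, u i * (w i - xplus i) * (xstar i - xplus i) =
        u i * (x i - xplus i) * (xstar i - xplus i) - f' x i * (xstar i - xplus i) := by
      intro i _
      have hui : u i * (u i)⁻¹ = 1 := mul_inv_cancel₀ (hu i).ne'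
      rw [hwi i]
      linear_combination (-(f' x i * (xstar i - xplus i))) * hui
    rw [Finset.sum_congr rfl h1, Finset.sum_sub_distrib]
    have hd : dot (f' x) (xstar - xplus) = ∑ i, f' x i * (xstar i - xplus i) := rfl
    rw [hd, hCdef]
  rw [hsum] at hproxs
  -- minimality of xstar
  have hxs := (isMinOn_iff.mp hxstar) xplus (Set.mem_univ xplus)
  -- dot decomposition
  have hdote : dot (f' x) (xstar - xplus) =
      dot (f' x) (xstar - x) - dot (f' x) (xplus - x) := by
    have h1 : xstar - xplus = (xstar - x) - (xplus - x) := by abel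
    rw [h1, dot_sub_right]
  -- key sums
  set Sps : ℝ := ∑ i, u i * (xplus i - xstar i)^2 with hSps
  set Sxs : ℝ := ∑ i, u i * (x i - xstar i)^2 with hSxs
  set Spx : ℝ := ∑ i, u i * (xplus i - x i)^2 with hSpx
  have hC : C = (Spx + Sps - Sxs)/2 := by
    have h1 : ∀ i ∈ Finset.univ, u i * (x i - xplus i) * (xstar i - xplus i) =
        (u i * (xplus i - x i)^2 + u i * (xplus i - xstar i)^2 - u i * (x i - xstar i)^2)/2 :=
      fun i _ => by ring
    rw [hCdef, Finset.sum_congr rfl h1, ← Finset.sum_div, Finset.sum_sub_distrib,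
      Finset.sum_add_distrib, hSpx, hSps, hSxs]
  -- goal rewrite
  have hgoalL : dot (xplus - xstar) ((Matrix.diagonal u).mulVec (xplus - xstar)) = Sps := by
    simp only [dot, hSps]
    refine Finset.sum_congr rfl fun i _ => ?_
    rw [Matrix.mulVec_diagonal]
    simp only [Pi.sub_apply]
    ring
  have hgoalR : dot (x - xstar) ((Matrix.diagonal u).mulVec (x - xstar)) = Sxs := by
    simp only [dot, hSxs]
    refine Finset.sum_congr rfl fun i _ => ?_
    rw [Matrix.mulVec_diagonal]
    simp only [Pi.sub_apply]
    ring
  rw [hgoalL, hgoalR]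
  -- sqnorm relations
  have hswap : sqnorm (xstar - x) = sqnorm (x - xstar) := by
    simp only [sqnorm, dot]
    exact Finset.sum_congr rfl fun i _ => by simp only [Pi.sub_apply]; ring
  have humaxb : Sxs ≤ umax * sqnorm (x - xstar) := by
    have h1 : ∀ i ∈ Finset.univ, u i * (x i - xstar i)^2 ≤
        umax * ((x - xstar) i * (x - xstar) i) := by
      intro i _
      have hui : u i ≤ umax := humax.2 (Set.mem_range_self i)
      simp only [Pi.sub_apply]
      nlinarith [sq_nonneg (x i - xstar i)]
    calc Sxs ≤ ∑ i, umax * ((x - xstar) i * (x - xstar) i) := Finset.sum_le_sum h1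
      _ = umax * sqnorm (x - xstar) := by rw [sqnorm, dot, Finset.mul_sum]
  -- connect Spx with sqnorm term in hup
  have hpx2 : Spx = ∑ i, u i * (xplus i - x i)^2 := hSpx
  -- final combination
  have hdiv : (m/umax) * Sxs ≤ m * sqnorm (x - xstar) := by
    have h1 : (m/umax) * Sxs ≤ (m/umax) * (umax * sqnorm (x - xstar)) :=
      mul_le_mul_of_nonneg_left humaxb (by positivity)
    have h2 : (m/umax) * (umax * sqnorm (x - xstar)) = m * sqnorm (x - xstar) := by
      field_simp
    linarith
  have hring : (1 - m/umax) * Sxs = Sxs - (m/umax) * Sxs := by ring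
  rw [hring]
  rw [hdote] at hproxs
  rw [hswap] at hlo
  linarith [hxs, hup, hlo, hpsd, hproxs, hC, hdiv]
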